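/- Let k be an algebraically closed field and D a division ring equipped with a k-algebra structure, such that the dimension of D as a k-vector space, as a cardinal, is strictly less than the cardinality of k. Then the structure map k → D is surjective, i.e., D = k. -/

import Mathlib

universe u

open Polynomial in
theorem linIndep_sub_inv_div
    {F E : Type*} [Field F] [DivisionRing E] [Algebra F E] {x : E} (H : Transcendental F x) :
    LinearIndependent F fun a ↦ (x - algebraMap F E a)⁻¹ := by
  classical
  rw [transcendental_iff] at H
  refine linearIndependent_iff'.2 fun s m hm i hi ↦ ?_
  have hnz (a : F) : x - algebraMap F E a ≠ 0 := fun h ↦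
    X_sub_C_ne_zero a <| H (X - C a) (by simp [h])
  let q : F → F[X] := fun i ↦ (s.erase i).prod fun j ↦ .X - .C j
  let b : E := aeval x (s.prod fun j ↦ (.X - .C j : F[X]))
  have hb : ∀ i ∈ s, b = aeval x (q i) * (x - algebraMap F E i) := fun i hi ↦ by
    simp only [b]
    rw [show (s.prod fun j ↦ (.X - .C j : F[X])) = q i * (.X - .C i) from
      (s.prod_erase_mul _ hi).symm, map_mul, map_sub, aeval_X, aeval_C]
  have h1 : ∀ i ∈ s, m i • (b * (x - algebraMap F E i)⁻¹) = m i • aeval x (q i) :=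
    fun i hi ↦ by rw [hb i hi, mul_inv_cancel_right₀ (hnz i)]
  replace hm := congr(b * $(hm))
  simp_rw [mul_zero, Finset.mul_sum, mul_smul_comm, Finset.sum_congr rfl h1] at hm
  let p : Polynomial F := s.sum fun i ↦ .C (m i) * q i
  have hp : p = 0 := H p (by
    simp_rw [p, map_sum, map_mul, aeval_C, ← Algebra.smul_def]
    exact hm)
  replace hm := congr(Polynomial.aeval i $(hp))
  have h2 : ∀ j ∈ s.erase i, m j * aeval i (q j) = 0 := fun j hj ↦ by
    have hij : i ∈ s.erase j := Finset.mem_erase_of_ne_of_mem (Finset.ne_of_mem_erase hj).symm hi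
    simp_rw [q, map_prod, map_sub, aeval_X, aeval_C, Algebra.algebraMap_self_apply,
      ← (s.erase j).prod_erase_mul _ hij, sub_self, mul_zero]
  simp_rw [map_zero, p, map_sum, map_mul, aeval_C, Algebra.algebraMap_self_apply,
    ← s.sum_erase_add _ hi, Finset.sum_eq_zero h2, zero_add] at hm
  have h3 : aeval i (q i) ≠ 0 := by
    simp_rw [q, map_prod, map_sub, aeval_X, aeval_C, Algebra.algebraMap_self_apply]
    exact Finset.prod_ne_zero_iff.2 fun j hj ↦ sub_ne_zero.2 (Finset.ne_of_mem_erase hj).symm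
  exact eq_zero_of_ne_zero_of_mul_right_eq_zero h3 hm

/-- if `D` is a division ring which is a `k`-algebra over an algebraically
closed field `k`, and `dim_k D < #k` as cardinals, then the structure map `k → D` is
surjective, i.e. `D = k`. -/
theorem statement5 {k : Type u} [Field k] [IsAlgClosed k]
    {D : Type u} [DivisionRing D] [Algebra k D]
    (hrank : Module.rank k D < Cardinal.mk k) :
    Function.Surjective (algebraMap k D) := by
  have hint : Algebra.IsIntegral k D := by
    constructor
    intro d
    have halg : IsAlgebraic k d := by
      by_contra hT
      have h := (linIndep_sub_inv_div (F := k) (E := D) hT).cardinal_le_rank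
      exact absurd (h.trans_lt hrank) (lt_irrefl _)
    exact halg.isIntegral
  exact IsAlgClosed.algebraMap_bijective_of_isIntegral.2
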